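/- Let u be a non-constant analytic function on the annulus A_{2η} = {z ∈ ℂ : e^{−4πη} ≤ |z| ≤ e^{4πη}} with sup_{A_η}|u| ≤ C_u. Then there exists M ≥ 2 such that for every E* ∈ {u(z) : z ∈ A_{η/4}}, the function u(z) − E* has at most M roots counted with multiplicity in A_{η/2}. -/

import Mathlib

open Filter Topology Set

open Classical in
noncomputable def ordNat (f : ℂ → ℂ) (z : ℂ) : ℕ :=
  if h : AnalyticAt ℂ f z then (analyticOrderAt f z).toNat else 0

lemma ordNat_eq {f : ℂ → ℂ} {z : ℂ} (h : AnalyticAt ℂ f z) :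
    ordNat f z = (analyticOrderAt f z).toNat := by
  rw [ordNat, dif_pos h]

lemma order_eq_one_of_deriv_ne_zero {f : ℂ → ℂ} {z : ℂ} (hf : AnalyticAt ℂ f z)
    (h0 : f z = 0) (hd : deriv f z ≠ 0) : analyticOrderAt f z = 1 := by
  rcases eq_or_ne (analyticOrderAt f z) ⊤ with htop | hfin
  · exfalso
    have hev : ∀ᶠ w in 𝓝 z, f w = (fun _ => (0:ℂ)) w := analyticOrderAt_eq_top.mp htop
    have : deriv f z = deriv (fun _ => (0:ℂ)) z := Filter.EventuallyEq.deriv_eq hev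
    rw [deriv_const] at this
    exact hd this
  · obtain ⟨n, hn⟩ := WithTop.ne_top_iff_exists.mp hfin
    obtain ⟨g, hg, hgz, hfg⟩ := (hf.analyticOrderAt_eq_natCast (n := n)).mp hn.symm
    simp only [smul_eq_mul] at hfg
    match n, hn with
    | 0, hn =>
      exfalso
      have := hfg.self_of_nhds
      simp only [pow_zero, one_mul, h0] at this
      exact hgz this.symm
    | 1, hn => exact hn.symm
    | (k+2), hn =>
      exfalso
      apply hd
      have h1 : HasDerivAt (fun w => (w - z) ^ (k+2)) ((((k:ℕ)+2) : ℕ) * (z - z) ^ (k+2-1) * 1) z :=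
        ((hasDerivAt_id z).sub_const z).pow (k+2)
      have h3 := h1.fun_mul (hg.differentiableAt.hasDerivAt)
      have hfg' : f =ᶠ[𝓝 z] fun w => (w - z) ^ (k+2) * g w := hfg
      rw [hfg'.deriv_eq, h3.deriv]
      simp

lemma local_count (u : ℂ → ℂ) (z₀ : ℂ) (hu : AnalyticAt ℂ u z₀)
    (hnc : ¬ ∀ᶠ w in 𝓝 z₀, u w = u z₀) :
    ∃ (s : Set ℂ) (m : ℕ), IsOpen s ∧ z₀ ∈ s ∧ 1 ≤ m ∧
      ∀ E : ℂ, ∀ F : Finset ℂ, ↑F ⊆ s → (∀ z ∈ F, u z = E) →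
        ∑ z ∈ F, ordNat (u - fun _ => E) z ≤ m := by
  classical
  set c := u z₀ with hc
  have huc : AnalyticAt ℂ (u - fun _ => c) z₀ := hu.sub analyticAt_const
  have hnetop : analyticOrderAt (u - fun _ => c) z₀ ≠ ⊤ := by
    intro htop
    rw [analyticOrderAt_eq_top] at htop
    have h := htop
    apply hnc
    filter_upwards [h] with w hw
    simpa [sub_eq_zero] using hw
  obtain ⟨m, horder⟩ : ∃ m : ℕ, analyticOrderAt (u - fun _ => c) z₀ = (m : ℕ∞) :=
    ⟨(analyticOrderAt (u - fun _ => c) z₀).toNat, (ENat.coe_toNat hnetop).symm⟩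
  obtain ⟨g, hg, hgz, hfg⟩ := (huc.analyticOrderAt_eq_natCast (n := m)).mp horder
  simp only [Pi.sub_apply, smul_eq_mul] at hfg
  have hm1 : 1 ≤ m := by
    rcases Nat.eq_zero_or_pos m with h0 | h
    · exfalso
      have h1 := hfg.self_of_nhds
      rw [h0] at h1
      simp only [pow_zero, one_mul, hc, sub_self] at h1
      exact hgz h1.symm
    · exact h
  set b := g z₀ with hb
  have hbne : b ≠ 0 := hgz
  obtain ⟨α, hα⟩ := IsAlgClosed.exists_pow_nat_eq b hm1
  have hαne : α ≠ 0 := by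
    intro h
    apply hbne
    rw [← hα, h, zero_pow (Nat.one_le_iff_ne_zero.mp hm1)]
  set h : ℂ → ℂ := fun w => α * Complex.exp (Complex.log (g w / b) / (m : ℂ)) with hhdef
  have hh : AnalyticAt ℂ h z₀ := by
    apply analyticAt_const.mul
    apply AnalyticAt.cexp
    apply AnalyticAt.div _ analyticAt_const (by exact_mod_cast Nat.one_le_iff_ne_zero.mp hm1 : (m:ℂ) ≠ 0)
    apply AnalyticAt.clog (hg.div analyticAt_const hbne)
    simp only [Pi.div_apply, ← hb, div_self hbne]
    exact Complex.one_mem_slitPlane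
  have hgne : ∀ᶠ w in 𝓝 z₀, g w ≠ 0 := hg.continuousAt.eventually_ne hgz
  have hhg : ∀ᶠ w in 𝓝 z₀, h w ^ m = g w := by
    filter_upwards [hgne] with w hw
    have hdiv : g w / b ≠ 0 := div_ne_zero hw hbne
    have hmne : (m : ℂ) ≠ 0 := by exact_mod_cast (by omega : m ≠ 0)
    calc (α * Complex.exp (Complex.log (g w / b) / (m:ℂ))) ^ m
        = α ^ m * Complex.exp (Complex.log (g w / b) / (m:ℂ)) ^ m := mul_pow _ _ _
      _ = b * Complex.exp ((m:ℂ) * (Complex.log (g w / b) / (m:ℂ))) := by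
          rw [hα, Complex.exp_nat_mul]
      _ = b * (g w / b) := by rw [mul_div_cancel₀ _ hmne, Complex.exp_log hdiv]
      _ = g w := by field_simp
  set φ : ℂ → ℂ := fun w => (w - z₀) * h w with hφdef
  have hφ : AnalyticAt ℂ φ z₀ := (analyticAt_id.sub analyticAt_const).mul hh
  have hφz : φ z₀ = 0 := by simp [hφdef]
  have hhz₀ : h z₀ = α := by
    simp [hhdef, ← hb, div_self hbne, Complex.log_one]
  have hd0 : h z₀ ≠ 0 := by rw [hhz₀]; exact hαne
  have hφd : HasDerivAt φ (h z₀) z₀ := by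
    have h1 := ((hasDerivAt_id z₀).sub_const z₀).fun_mul (hh.differentiableAt.hasDerivAt)
    simpa using h1
  have hsd : HasStrictDerivAt φ (h z₀) z₀ := by
    obtain ⟨p, hp⟩ := hφ
    have h1 := hp.hasStrictDerivAt
    have h2 : (p 1 fun _ => 1) = h z₀ := by
      rw [← h1.hasDerivAt.deriv, hφd.deriv]
    rwa [h2] at h1
  obtain ⟨ψ, hψ⟩ : ∃ ψ : ℂ → ℂ, ∀ᶠ w in 𝓝 z₀, ψ (φ w) = w :=
    ⟨_, (hsd.hasStrictFDerivAt_equiv hd0).eventually_left_inverse⟩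
  -- deriv φ is analytic near z₀ hence continuous, nonzero near z₀
  have hφan : ∀ᶠ w in 𝓝 z₀, AnalyticAt ℂ φ w := hφ.eventually_analyticAt
  have hdφcont : ContinuousAt (deriv φ) z₀ := by
    obtain ⟨t, ht, htφ⟩ := hφan.exists_mem
    have h1 : AnalyticOnNhd ℂ φ (interior t) := fun w hw => htφ w (interior_subset hw)
    have h2 := h1.deriv
    exact (h2 z₀ (mem_interior_iff_mem_nhds.mpr ht)).continuousAt
  have hdφz₀ : deriv φ z₀ = h z₀ := hφd.deriv
  have hdne : ∀ᶠ w in 𝓝 z₀, deriv φ w ≠ 0 :=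
    hdφcont.eventually_ne (by rw [hdφz₀]; exact hd0)
  have huan : ∀ᶠ w in 𝓝 z₀, AnalyticAt ℂ u w := hu.eventually_analyticAt
  have hall : ∀ᶠ w in 𝓝 z₀, (AnalyticAt ℂ u w ∧ AnalyticAt ℂ φ w) ∧
      (u w - c = φ w ^ m ∧ ψ (φ w) = w) ∧ deriv φ w ≠ 0 := by
    filter_upwards [huan, hφan, hfg, hhg, hψ, hdne] with w h1 h2 h3 h4 h5 h6
    refine ⟨⟨h1, h2⟩, ⟨?_, h5⟩, h6⟩
    rw [h3, ← h4]
    exact (mul_pow (w - z₀) (h w) m).symm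
  obtain ⟨s, hsmem, hsopen, hzs⟩ := eventually_nhds_iff.mp hall
  have hinj : Set.InjOn φ s := by
    intro x hx y hy hxy
    have h1 := (hsmem x hx).2.1.2
    have h2 := (hsmem y hy).2.1.2
    rw [← h1, ← h2, hxy]
  refine ⟨s, m, hsopen, hzs, hm1, ?_⟩
  intro E F hFs hFroot
  by_cases hE : E = c
  · -- all roots are z₀
    have hsub : F ⊆ ({z₀} : Finset ℂ) := by
      intro z hz
      have hzs' : z ∈ s := hFs hz
      have h1 : u z - c = φ z ^ m := (hsmem z hzs').2.1.1
      rw [hFroot z hz, hE, sub_self] at h1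
      have hz0 : φ z = 0 := pow_eq_zero_iff (by omega) |>.mp h1.symm
      have : z = z₀ := hinj hzs' hzs (by rw [hz0, hφz])
      simp [this]
    calc ∑ z ∈ F, ordNat (u - fun _ => E) z
        ≤ ∑ z ∈ ({z₀} : Finset ℂ), ordNat (u - fun _ => E) z :=
          Finset.sum_le_sum_of_subset hsub
      _ = ordNat (u - fun _ => c) z₀ := by rw [hE]; simp
      _ = m := by rw [ordNat_eq huc, horder]; rfl
  · have hEa : E - c ≠ 0 := sub_ne_zero.mpr hE
    have hord1 : ∀ z ∈ F, ordNat (u - fun _ => E) z = 1 := by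
      intro z hz
      have hzs' : z ∈ s := hFs hz
      obtain ⟨⟨hu_z, hφ_z⟩, ⟨heq, -⟩, hdz⟩ := hsmem z hzs'
      have hf : AnalyticAt ℂ (u - fun _ => E : ℂ → ℂ) z := hu_z.sub analyticAt_const
      have hval : (u - fun _ => E : ℂ → ℂ) z = 0 := by simp [hFroot z hz]
      have hφzm : φ z ^ m = E - c := by rw [← heq, hFroot z hz]
      have hφzne : φ z ≠ 0 := by
        intro h0
        apply hEa
        rw [← hφzm, h0, zero_pow (by omega)]
      have hueq : u =ᶠ[𝓝 z] fun w => c + φ w ^ m := by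
        filter_upwards [hsopen.mem_nhds hzs'] with w hw
        have h1 := (hsmem w hw).2.1.1
        rw [← h1]; ring
      have hdu : deriv u z = (m : ℂ) * φ z ^ (m - 1) * deriv φ z := by
        rw [hueq.deriv_eq]
        have hφd' : HasDerivAt φ (deriv φ z) z := hφ_z.differentiableAt.hasDerivAt
        exact ((hφd'.pow m).const_add c).deriv
      have hdne' : deriv (u - fun _ => E : ℂ → ℂ) z ≠ 0 := by
        have heq2 : deriv (u - fun _ => E : ℂ → ℂ) z = deriv u z := by
          have h3 : (u - fun _ => E : ℂ → ℂ) = fun w => u w - E := rfl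
          rw [h3, deriv_sub_const]
        rw [heq2, hdu]
        exact mul_ne_zero (mul_ne_zero (by exact_mod_cast (by omega : m ≠ 0))
          (pow_ne_zero _ hφzne)) hdz
      rw [ordNat_eq hf, order_eq_one_of_deriv_ne_zero hf hval hdne']
      rfl
    rw [Finset.sum_congr rfl hord1]
    simp only [Finset.sum_const, smul_eq_mul, mul_one]
    have hmaps : ∀ z ∈ F, φ z ∈ (Polynomial.nthRoots m (E - c)).toFinset := by
      intro z hz
      rw [Multiset.mem_toFinset, Polynomial.mem_nthRoots (by omega : 0 < m)]
      have h1 : u z - c = φ z ^ m := (hsmem z (hFs hz)).2.1.1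
      rw [hFroot z hz] at h1
      exact h1.symm
    calc F.card ≤ (Polynomial.nthRoots m (E - c)).toFinset.card :=
          Finset.card_le_card_of_injOn φ hmaps
            (fun x hx y hy => hinj (hFs hx) (hFs hy))
      _ ≤ Multiset.card (Polynomial.nthRoots m (E - c)) := Multiset.toFinset_card_le _
      _ ≤ m := Polynomial.card_nthRoots m (E - c)

lemma cover_sum (w : ℂ → ℕ) (L : List (Set ℂ × ℕ)) :
    ∀ T : Finset ℂ,
      (∀ z ∈ T, ∃ p ∈ L, z ∈ p.1) →
      (∀ p ∈ L, ∀ F : Finset ℂ, F ⊆ T → ↑F ⊆ p.1 → ∑ z ∈ F, w z ≤ p.2) →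
      ∑ z ∈ T, w z ≤ (L.map Prod.snd).sum := by
  induction L with
  | nil =>
    intro T hcov _
    have : T = ∅ := Finset.eq_empty_of_forall_notMem fun z hz => by simpa using hcov z hz
    simp [this]
  | cons p L ih =>
    intro T hcov hbnd
    classical
    rw [← Finset.sum_filter_add_sum_filter_not T (· ∈ p.1)]
    have h1 : ∑ z ∈ T.filter (· ∈ p.1), w z ≤ p.2 :=
      hbnd p List.mem_cons_self _ (Finset.filter_subset _ _)
        (fun z hz => (Finset.mem_filter.mp (by exact_mod_cast hz)).2)
    have h2 : ∑ z ∈ T.filter (fun z => ¬ z ∈ p.1), w z ≤ (L.map Prod.snd).sum := by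
      apply ih
      · intro z hz
        obtain ⟨hzT, hznp⟩ := Finset.mem_filter.mp hz
        obtain ⟨q, hq, hzq⟩ := hcov z hzT
        rcases List.mem_cons.mp hq with rfl | hq'
        · exact absurd hzq hznp
        · exact ⟨q, hq', hzq⟩
      · intro q hq F hF hF2
        exact hbnd q (List.mem_cons_of_mem _ hq) F (hF.trans (Finset.filter_subset _ _)) hF2
    simp only [List.map_cons, List.sum_cons]
    exact Nat.add_le_add h1 h2

lemma annulus_preconnected (a b : ℝ) (ha : 0 < a) :
    IsPreconnected {z : ℂ | a ≤ ‖z‖ ∧ ‖z‖ ≤ b} := by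
  have himg : {z : ℂ | a ≤ ‖z‖ ∧ ‖z‖ ≤ b}
      = (fun p : ℝ × ℝ => (p.1 : ℂ) * Complex.exp (p.2 * Complex.I)) ''
        (Set.Icc a b ×ˢ Set.univ) := by
    ext z
    constructor
    · rintro ⟨h1, h2⟩
      exact ⟨(‖z‖, Complex.arg z), ⟨⟨h1, h2⟩, trivial⟩, Complex.norm_mul_exp_arg_mul_I z⟩
    · rintro ⟨⟨r, θ⟩, ⟨⟨hr1, hr2⟩, -⟩, rfl⟩
      have habs : ‖(r:ℂ) * Complex.exp ((θ:ℂ) * Complex.I)‖ = r := by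
        rw [norm_mul, Complex.norm_exp_ofReal_mul_I, mul_one, Complex.norm_real, Real.norm_eq_abs,
          abs_of_nonneg (le_trans ha.le hr1)]
      rw [Set.mem_setOf_eq, habs]
      exact ⟨hr1, hr2⟩
  rw [himg]
  apply IsPreconnected.image
  · exact isPreconnected_Icc.prod isPreconnected_univ
  · apply Continuous.continuousOn
    exact (Complex.continuous_ofReal.comp continuous_fst).mul
      (Complex.continuous_exp.comp
        ((Complex.continuous_ofReal.comp continuous_snd).mul continuous_const))

/-- A non-constant analytic function on the annulus `A_{2η}` bounded by `C_u` on `A_η`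
has a uniform bound `M ≥ 2` on the number of roots (counted with multiplicity, via the
vanishing order) of `u − E*` in `A_{η/2}`, uniformly over `E*` in `u(A_{η/4})`. -/
theorem annulus_root_count_bound (η Cu : ℝ) (hη : 0 < η) (u : ℂ → ℂ)
    (hu : ∀ z : ℂ,
      Real.exp (-(4 * Real.pi * η)) ≤ ‖z‖ →
      ‖z‖ ≤ Real.exp (4 * Real.pi * η) → AnalyticAt ℂ u z)
    (hbound : ∀ z : ℂ,
      Real.exp (-(2 * Real.pi * η)) ≤ ‖z‖ →
      ‖z‖ ≤ Real.exp (2 * Real.pi * η) → ‖u z‖ ≤ Cu)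
    (hnc : ∃ z w : ℂ,
      (Real.exp (-(4 * Real.pi * η)) ≤ ‖z‖ ∧
        ‖z‖ ≤ Real.exp (4 * Real.pi * η)) ∧
      (Real.exp (-(4 * Real.pi * η)) ≤ ‖w‖ ∧
        ‖w‖ ≤ Real.exp (4 * Real.pi * η)) ∧ u z ≠ u w) :
    ∃ M : ℕ, 2 ≤ M ∧ ∀ E : ℂ,
      (∃ ζ : ℂ, Real.exp (-(2 * Real.pi * (η / 4))) ≤ ‖ζ‖ ∧
        ‖ζ‖ ≤ Real.exp (2 * Real.pi * (η / 4)) ∧ u ζ = E) →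
      ∀ T : Finset ℂ,
        ∀ hT : (∀ z ∈ T, (Real.exp (-(2 * Real.pi * (η / 2))) ≤ ‖z‖ ∧
          ‖z‖ ≤ Real.exp (2 * Real.pi * (η / 2))) ∧ u z = E),
        (∑ z ∈ T.attach,
          (analyticOrderAt (u - fun _ => E) z.1).toNat) ≤ M := by
  have hπ := Real.pi_pos
  set A : Set ℂ := {z | Real.exp (-(4 * Real.pi * η)) ≤ ‖z‖ ∧
    ‖z‖ ≤ Real.exp (4 * Real.pi * η)} with hA
  set K : Set ℂ := {z | Real.exp (-(2 * Real.pi * (η / 2))) ≤ ‖z‖ ∧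
    ‖z‖ ≤ Real.exp (2 * Real.pi * (η / 2))} with hK
  have hKA : K ⊆ A := by
    rintro z ⟨h1, h2⟩
    constructor
    · exact le_trans (Real.exp_le_exp.mpr (by nlinarith)) h1
    · exact le_trans h2 (Real.exp_le_exp.mpr (by nlinarith))
  have hAU : ∀ z ∈ A, AnalyticAt ℂ u z := fun z hz => hu z hz.1 hz.2
  obtain ⟨z₁, w₁, hz₁, hw₁, hne⟩ := hnc
  have hz₁A : z₁ ∈ A := hz₁
  have hw₁A : w₁ ∈ A := hw₁
  set U : Set ℂ := {z | AnalyticAt ℂ u z} with hU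
  have hAU' : A ⊆ U := hAU
  set V : Set ℂ := connectedComponentIn U z₁ with hV
  have hVopen : IsOpen V := (isOpen_analyticAt ℂ u).connectedComponentIn
  have hAconn : IsPreconnected A :=
    annulus_preconnected _ _ (Real.exp_pos _)
  have hAV : A ⊆ V := hAconn.subset_connectedComponentIn hz₁A hAU'
  have hVU : V ⊆ U := connectedComponentIn_subset U z₁
  have hVpre : IsPreconnected V := isPreconnected_connectedComponentIn
  have hnconst : ∀ z₀ ∈ V, ¬ ∀ᶠ w in 𝓝 z₀, u w = u z₀ := by
    intro z₀ hz₀ hev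
    have hVan : AnalyticOnNhd ℂ u V := fun z hz => hVU hz
    have heqon : Set.EqOn u (fun _ => u z₀) V :=
      hVan.eqOn_of_preconnected_of_eventuallyEq analyticOnNhd_const hVpre hz₀ hev
    exact hne ((heqon (hAV hz₁A)).trans (heqon (hAV hw₁A)).symm)
  have hKc : IsCompact K := by
    apply Metric.isCompact_of_isClosed_isBounded
    · have : K = (fun z : ℂ => ‖z‖) ⁻¹'
        (Set.Icc (Real.exp (-(2 * Real.pi * (η / 2)))) (Real.exp (2 * Real.pi * (η / 2)))) := by
        ext z; simp [hK, Set.mem_Icc]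
      rw [this]
      exact isClosed_Icc.preimage continuous_norm
    · apply Bornology.IsBounded.subset
        (Metric.isBounded_closedBall (x := (0:ℂ)) (r := Real.exp (2 * Real.pi * (η / 2))))
      intro z hz
      rw [Metric.mem_closedBall, Complex.dist_eq, sub_zero]
      exact hz.2
  have hKV : K ⊆ V := fun z hz => hAV (hKA hz)
  have hloc : ∀ z₀ ∈ K, ∃ (s : Set ℂ) (m : ℕ), IsOpen s ∧ z₀ ∈ s ∧ 1 ≤ m ∧
      ∀ E : ℂ, ∀ F : Finset ℂ, ↑F ⊆ s → (∀ z ∈ F, u z = E) →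
        ∑ z ∈ F, ordNat (u - fun _ => E) z ≤ m :=
    fun z₀ hz₀ => local_count u z₀ (hVU (hKV hz₀)) (hnconst z₀ (hKV hz₀))
  choose! s m hprop using hloc
  obtain ⟨t, htK, htfin, htcov⟩ := hKc.elim_finite_subcover_image
    (fun z₀ (hz₀ : z₀ ∈ K) => (hprop z₀ hz₀).1)
    (fun z hz => Set.mem_biUnion hz (hprop z hz).2.1)
  classical
  set L : List (Set ℂ × ℕ) := htfin.toFinset.toList.map (fun z₀ => (s z₀, m z₀)) with hL
  refine ⟨2 + (L.map Prod.snd).sum, Nat.le_add_right _ _, ?_⟩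
  intro E _hE T hT
  have hTK : ∀ z ∈ T, z ∈ K := fun z hz => ⟨(hT z hz).1.1, (hT z hz).1.2⟩
  have key : ∑ z ∈ T, ordNat (u - fun _ => E) z ≤ (L.map Prod.snd).sum := by
    apply cover_sum
    · intro z hz
      have := htcov (hTK z hz)
      obtain ⟨i, hit, hzi⟩ := Set.mem_iUnion₂.mp this
      refine ⟨(s i, m i), ?_, hzi⟩
      rw [hL]
      exact List.mem_map.mpr ⟨i, by rw [Finset.mem_toList, Set.Finite.mem_toFinset]; exact hit, rfl⟩
    · intro p hp F hFT hFp
      rw [hL] at hp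
      obtain ⟨i, hit, rfl⟩ := List.mem_map.mp hp
      rw [Finset.mem_toList, Set.Finite.mem_toFinset] at hit
      exact (hprop i (htK hit)).2.2.2 E F hFp (fun z hz => (hT z (hFT hz)).2)
  have hstep : ∑ z ∈ T.attach, ordNat (u - fun _ => E : ℂ → ℂ) z.1
      = ∑ z ∈ T, ordNat (u - fun _ => E) z := Finset.sum_attach _ _
  calc (∑ z ∈ T.attach, _) = ∑ z ∈ T.attach, ordNat (u - fun _ => E : ℂ → ℂ) z.1 :=
        Finset.sum_congr rfl (fun z _ => (ordNat_eq (f := u - fun _ => E)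
          ((hAU z.1 (hKA ⟨(hT z.1 z.2).1.1, (hT z.1 z.2).1.2⟩)).sub analyticAt_const)).symm)
    _ = ∑ z ∈ T, ordNat (u - fun _ => E) z := hstep
    _ ≤ (L.map Prod.snd).sum := key
    _ ≤ 2 + (L.map Prod.snd).sum := Nat.le_add_left _ _
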